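/- Let R be a unital ring, n ≥ 2, and M a 2-torsion free unital Mₙ(R)-bimodule. If D : Mₙ(R) → M is an additive map such that AB = BA = 0 implies D(A)B + A D(B) + D(B)A + B D(A) - A D(1)B - B D(1)A = 0, then there exists a derivation δ : Mₙ(R) → M with D(A) = δ(A) + A·D(1) for all A ∈ Mₙ(R). -/

import Mathlib

/-- A (not necessarily unital) bimodule structure of a ring `A` on an
additive group `M`, given by a left action `l` and a right action `r`. -/
structure RingBimod (A M : Type*) [Ring A] [AddCommGroup M] where
  l : A → M → M
  r : M → A → M
  l_add : ∀ a m₁ m₂, l a (m₁ + m₂) = l a m₁ + l a m₂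
  add_l : ∀ a₁ a₂ m, l (a₁ + a₂) m = l a₁ m + l a₂ m
  r_add : ∀ m₁ m₂ a, r (m₁ + m₂) a = r m₁ a + r m₂ a
  add_r : ∀ m a₁ a₂, r m (a₁ + a₂) = r m a₁ + r m a₂
  mul_l : ∀ a₁ a₂ m, l (a₁ * a₂) m = l a₁ (l a₂ m)
  r_mul : ∀ m a₁ a₂, r m (a₁ * a₂) = r (r m a₁) a₂
  l_r : ∀ a₁ m a₂, l a₁ (r m a₂) = r (l a₁ m) a₂

namespace RingBimod

variable {A M : Type*} [Ring A] [AddCommGroup M] (bm : RingBimod A M)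

@[simp] lemma l_l (a b : A) (m : M) : bm.l a (bm.l b m) = bm.l (a*b) m :=
  (bm.mul_l a b m).symm

@[simp] lemma r_r (m : M) (a b : A) : bm.r (bm.r m a) b = bm.r m (a*b) :=
  (bm.r_mul m a b).symm

@[simp] lemma lr (a : A) (m : M) (b : A) :
    bm.l a (bm.r m b) = bm.r (bm.l a m) b := bm.l_r a m b

@[simp] lemma ladd (a : A) (m m' : M) : bm.l a (m + m') = bm.l a m + bm.l a m' :=
  bm.l_add a m m'

@[simp] lemma addl (a b : A) (m : M) : bm.l (a + b) m = bm.l a m + bm.l b m :=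
  bm.add_l a b m

@[simp] lemma radd (m m' : M) (a : A) : bm.r (m + m') a = bm.r m a + bm.r m' a :=
  bm.r_add m m' a

@[simp] lemma addr (m : M) (a b : A) : bm.r m (a + b) = bm.r m a + bm.r m b :=
  bm.add_r m a b

@[simp] lemma lzero (a : A) : bm.l a (0 : M) = 0 := by
  have h := bm.l_add a 0 0
  rw [add_zero] at h
  exact (left_eq_add.mp h)

@[simp] lemma zerol (m : M) : bm.l (0 : A) m = 0 := by
  have h := bm.add_l 0 0 m
  rw [add_zero] at h
  exact (left_eq_add.mp h)

@[simp] lemma rzero (a : A) : bm.r (0 : M) a = 0 := by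
  have h := bm.r_add 0 0 a
  rw [add_zero] at h
  exact (left_eq_add.mp h)

@[simp] lemma zeror (m : M) : bm.r m (0 : A) = 0 := by
  have h := bm.add_r m 0 0
  rw [add_zero] at h
  exact (left_eq_add.mp h)

@[simp] lemma lneg (a : A) (m : M) : bm.l a (-m) = -(bm.l a m) := by
  have h := bm.l_add a m (-m)
  rw [add_neg_cancel, bm.lzero] at h
  exact (neg_eq_of_add_eq_zero_right h.symm).symm

@[simp] lemma negl (a : A) (m : M) : bm.l (-a) m = -(bm.l a m) := by
  have h := bm.add_l a (-a) m
  rw [add_neg_cancel, bm.zerol] at h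
  exact (neg_eq_of_add_eq_zero_right h.symm).symm

@[simp] lemma rneg (m : M) (a : A) : bm.r (-m) a = -(bm.r m a) := by
  have h := bm.r_add m (-m) a
  rw [add_neg_cancel, bm.rzero] at h
  exact (neg_eq_of_add_eq_zero_right h.symm).symm

@[simp] lemma negr (m : M) (a : A) : bm.r m (-a) = -(bm.r m a) := by
  have h := bm.add_r m a (-a)
  rw [add_neg_cancel, bm.zeror] at h
  exact (neg_eq_of_add_eq_zero_right h.symm).symm

@[simp] lemma lsub (a : A) (m m' : M) : bm.l a (m - m') = bm.l a m - bm.l a m' := by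
  rw [sub_eq_add_neg, bm.ladd, bm.lneg, sub_eq_add_neg]

@[simp] lemma subl (a b : A) (m : M) : bm.l (a - b) m = bm.l a m - bm.l b m := by
  rw [sub_eq_add_neg, bm.addl, bm.negl, sub_eq_add_neg]

@[simp] lemma rsub (m m' : M) (a : A) : bm.r (m - m') a = bm.r m a - bm.r m' a := by
  rw [sub_eq_add_neg, bm.radd, bm.rneg, sub_eq_add_neg]

@[simp] lemma subr (m : M) (a b : A) : bm.r m (a - b) = bm.r m a - bm.r m b := by
  rw [sub_eq_add_neg, bm.addr, bm.negr, sub_eq_add_neg]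

lemma suml {ι : Type*} (s : Finset ι) (f : ι → A) (m : M) :
    bm.l (∑ i ∈ s, f i) m = ∑ i ∈ s, bm.l (f i) m := by
  classical
  induction s using Finset.induction_on with
  | empty => simp
  | insert _ _ h ih => simp [Finset.sum_insert h, ih]

end RingBimod

/-- All hypotheses of the main theorem, bundled, with `D` already normalized to
the additive map `δ` satisfying `δ 1 = 0`. -/
structure ZCtx (A M : Type*) [Ring A] [AddCommGroup M] where
  bm : RingBimod A M
  δ : A → M
  hu1 : ∀ m : M, bm.l 1 m = m
  hu2 : ∀ m : M, bm.r m 1 = m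
  htf : ∀ m : M, m + m = 0 → m = 0
  hadd : ∀ a b : A, δ (a + b) = δ a + δ b
  hδ1 : δ 1 = 0
  hf : ∀ a b : A, a * b = 0 → b * a = 0 →
    bm.r (δ a) b + bm.l a (δ b) + bm.r (δ b) a + bm.l b (δ a) = 0

namespace ZCtx

variable {A M : Type*} [Ring A] [AddCommGroup M] (c : ZCtx A M)
include c

lemma hδ0 : c.δ 0 = 0 := by
  have h := c.hadd 0 0
  rw [add_zero] at h
  exact (left_eq_add.mp h)

lemma hδneg (a : A) : c.δ (-a) = -(c.δ a) := by
  have h := c.hadd a (-a)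
  rw [add_neg_cancel, c.hδ0] at h
  exact (neg_eq_of_add_eq_zero_right h.symm).symm

lemma hδsub (a b : A) : c.δ (a - b) = c.δ a - c.δ b := by
  rw [sub_eq_add_neg, c.hadd, c.hδneg, sub_eq_add_neg]

lemma hδsum {ι : Type*} (s : Finset ι) (f : ι → A) :
    c.δ (∑ i ∈ s, f i) = ∑ i ∈ s, c.δ (f i) := by
  classical
  induction s using Finset.induction_on with
  | empty => simpa using c.hδ0
  | insert _ _ h ih => simp [Finset.sum_insert h, c.hadd, ih]

lemma half (u v : M) (h : u + u = v + v) : u = v := by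
  have h2 : (u - v) + (u - v) = 0 := by
    have : (u - v) + (u - v) = (u + u) - (v + v) := by abel
    rw [this, h, sub_self]
  have := c.htf _ h2
  exact sub_eq_zero.mp this

/-- Jordan rule on idempotents. -/
lemma idem (P : A) (hP : P * P = P) :
    c.δ P = c.bm.r (c.δ P) P + c.bm.l P (c.δ P) := by
  have h1 : P * (1 - P) = 0 := by rw [mul_sub, mul_one, hP, sub_self]
  have h2 : (1 - P) * P = 0 := by rw [sub_mul, one_mul, hP, sub_self]
  have h := c.hf P (1 - P) h1 h2
  rw [c.hδsub, c.hδ1] at h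
  simp only [zero_sub, RingBimod.lneg, RingBimod.rneg, RingBimod.subr,
    RingBimod.subl, RingBimod.lsub, RingBimod.rsub, c.hu1, c.hu2] at h
  apply c.half
  have key : c.δ P + c.δ P - ((c.bm.r (c.δ P) P + c.bm.l P (c.δ P)) +
      (c.bm.r (c.δ P) P + c.bm.l P (c.δ P))) = 0 := by
    rw [← h]; abel
  exact sub_eq_zero.mp key

/-- Peirce-type structure lemma for `X` with `PX = X`, `XP = 0`. -/
lemma B2 (P X : A) (hP : P * P = P) (hPX : P * X = X) (hXP : X * P = 0) :
    c.δ X = c.bm.r (c.δ X) P + c.bm.l P (c.δ X) + c.bm.r (c.δ P) X + c.bm.l X (c.δ P) := by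
  have hXX : X * X = 0 := by
    calc X*X = X*(P*X) := by rw [hPX]
    _ = (X*P)*X := by rw [mul_assoc]
    _ = 0 := by rw [hXP, zero_mul]
  have hplus : (P+X)*(P+X) = P+X := by
    rw [add_mul, mul_add, mul_add, hP, hPX, hXP, hXX]; abel
  have hminus : (P-X)*(P-X) = P-X := by
    rw [sub_mul, mul_sub, mul_sub, hP, hPX, hXP, hXX]; abel
  have k1 := c.idem _ hplus
  have k2 := c.idem _ hminus
  rw [c.hadd] at k1
  rw [c.hδsub] at k2
  simp only [RingBimod.radd, RingBimod.addr, RingBimod.ladd, RingBimod.addl,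
    RingBimod.rsub, RingBimod.subr, RingBimod.lsub, RingBimod.subl] at k1 k2
  apply c.half
  linear_combination (norm := abel) k1 - k2

/-- Corner vanishing: `P δ(W) P = 0` when `PW = WP = 0`. -/
lemma B3 (P W : A) (hP : P * P = P) (h1 : P * W = 0) (h2 : W * P = 0) :
    c.bm.r (c.bm.l P (c.δ W)) P = 0 := by
  have h := c.hf P W h1 h2
  have hh := congrArg (fun m => c.bm.r (c.bm.l P m) P) h
  simp only [RingBimod.ladd, RingBimod.radd, RingBimod.lr, RingBimod.l_l,
    RingBimod.r_r, hP, h1, h2, RingBimod.zerol, RingBimod.zeror,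
    RingBimod.rzero, RingBimod.lzero, zero_add, add_zero] at hh
  exact c.htf _ hh

/-- `δ(y) P = -(y δ(P)) P` when `Py = yP = 0`. -/
lemma LemW (P y : A) (hP : P * P = P) (h1 : P * y = 0) (h2 : y * P = 0) :
    c.bm.r (c.δ y) P = -(c.bm.r (c.bm.l y (c.δ P)) P) := by
  have h := c.hf P y h1 h2
  have hh := congrArg (fun m => c.bm.r m P) h
  simp only [RingBimod.radd, RingBimod.r_r, RingBimod.lr, hP, h2,
    RingBimod.zeror, RingBimod.rzero, zero_add, add_zero] at hh
  rw [c.B3 P y hP h1 h2] at hh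
  rw [zero_add] at hh
  exact eq_neg_of_add_eq_zero_left hh

/-- `P δ(y) = -P (δ(P) y)` when `Py = yP = 0`. -/
lemma LemV (P y : A) (hP : P * P = P) (h1 : P * y = 0) (h2 : y * P = 0) :
    c.bm.l P (c.δ y) = -(c.bm.r (c.bm.l P (c.δ P)) y) := by
  have h := c.hf P y h1 h2
  have hh := congrArg (c.bm.l P) h
  simp only [RingBimod.ladd, RingBimod.l_l, RingBimod.lr, hP, h1,
    RingBimod.zerol, RingBimod.lzero, zero_add, add_zero] at hh
  rw [c.B3 P y hP h1 h2] at hh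
  rw [add_zero] at hh
  exact eq_neg_of_add_eq_zero_right hh

lemma R1 (P N : A) (hP : P * P = P) (h1 : P * N = N) (h2 : N * P = N) :
    c.bm.r (c.δ N) (1-P) - c.bm.l N (c.δ P) - c.bm.r (c.δ P) N
      + c.bm.l (1-P) (c.δ N) = 0 := by
  have e1 : N * (1-P) = 0 := by rw [mul_sub, mul_one, h2, sub_self]
  have e2 : (1-P) * N = 0 := by rw [sub_mul, one_mul, h1, sub_self]
  have h := c.hf N (1-P) e1 e2
  rw [c.hδsub, c.hδ1] at h
  simp only [zero_sub, RingBimod.lneg, RingBimod.rneg] at h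
  linear_combination (norm := abel) h

lemma rhoQ (P N : A) (hP : P * P = P) (h1 : P * N = N) (h2 : N * P = N) :
    c.bm.r (c.δ N) (1-P) = c.bm.r (c.bm.l N (c.δ P)) (1-P) := by
  have e1 : N * (1-P) = 0 := by rw [mul_sub, mul_one, h2, sub_self]
  have e2 : (1-P) * N = 0 := by rw [sub_mul, one_mul, h1, sub_self]
  have hQ : (1-P) * (1-P) = 1-P := by
    rw [sub_mul, one_mul, mul_sub, mul_one, hP]; abel
  have h := c.R1 P N hP h1 h2
  have hh := congrArg (fun m => c.bm.r m (1-P)) h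
  simp only [RingBimod.radd, RingBimod.rsub, RingBimod.r_r, RingBimod.lr,
    hQ, e1, RingBimod.zeror, RingBimod.rzero, RingBimod.zerol,
    RingBimod.lzero] at hh
  rw [c.B3 (1-P) N hQ e2 e1] at hh
  linear_combination (norm := abel) hh

lemma rhoQ' (P N : A) (hP : P * P = P) (h1 : P * N = N) (h2 : N * P = N) :
    c.bm.l (1-P) (c.δ N) = c.bm.r (c.bm.l (1-P) (c.δ P)) N := by
  have e1 : N * (1-P) = 0 := by rw [mul_sub, mul_one, h2, sub_self]
  have e2 : (1-P) * N = 0 := by rw [sub_mul, one_mul, h1, sub_self]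
  have hQ : (1-P) * (1-P) = 1-P := by
    rw [sub_mul, one_mul, mul_sub, mul_one, hP]; abel
  have h := c.R1 P N hP h1 h2
  have hh := congrArg (c.bm.l (1-P)) h
  simp only [RingBimod.ladd, RingBimod.lsub, RingBimod.l_l, RingBimod.lr,
    hQ, e2, RingBimod.zerol, RingBimod.lzero, RingBimod.rzero,
    RingBimod.zeror] at hh
  rw [c.B3 (1-P) N hQ e2 e1] at hh
  linear_combination (norm := abel) hh

/-- Jordan product rule for `C ∈ PMQ`, `W ∈ QMQ`. -/
lemma B4 (P C W : A) (hP : P * P = P) (hC1 : P * C = C) (hC2 : C * P = 0)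
    (hW1 : P * W = 0) (hW2 : W * P = 0) :
    c.δ (C*W) = c.bm.r (c.δ C) W + c.bm.l C (c.δ W)
      + c.bm.r (c.δ W) C + c.bm.l W (c.δ C) := by
  have hCC : C * C = 0 := by
    calc C*C = C*(P*C) := by rw [hC1]
    _ = (C*P)*C := by rw [mul_assoc]
    _ = 0 := by rw [hC2, zero_mul]
  have hWC : W * C = 0 := by
    calc W*C = W*(P*C) := by rw [hC1]
    _ = (W*P)*C := by rw [mul_assoc]
    _ = 0 := by rw [hW2, zero_mul]
  have hPCW : P * (C*W) = C*W := by rw [← mul_assoc, hC1]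
  have hCWP : (C*W) * P = 0 := by rw [mul_assoc, hW2, mul_zero]
  have p1 : (P+C) * (W - C*W) = 0 := by
    rw [add_mul, mul_sub, mul_sub, hW1, hPCW, ← mul_assoc, hCC, zero_mul]; abel
  have p2 : (W - C*W) * (P+C) = 0 := by
    rw [sub_mul, mul_add, mul_add, hW2, hWC, hCWP, mul_assoc, hWC, mul_zero]; abel
  have p3 : (P-C) * (W + C*W) = 0 := by
    rw [sub_mul, mul_add, mul_add, hW1, hPCW, ← mul_assoc, hCC, zero_mul]; abel
  have p4 : (W + C*W) * (P-C) = 0 := by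
    rw [add_mul, mul_sub, mul_sub, hW2, hWC, hCWP, mul_assoc, hWC, mul_zero]; abel
  have h1 := c.hf (P+C) (W - C*W) p1 p2
  have h2 := c.hf (P-C) (W + C*W) p3 p4
  rw [c.hadd, c.hδsub] at h1
  rw [c.hδsub, c.hadd] at h2
  simp only [RingBimod.radd, RingBimod.addr, RingBimod.ladd, RingBimod.addl,
    RingBimod.rsub, RingBimod.subr, RingBimod.lsub, RingBimod.subl] at h1 h2
  have k := c.B2 P (C*W) hP hPCW hCWP
  apply c.half
  linear_combination (norm := abel) k + k - h1 + h2

/-- Jordan product rule for `Y ∈ QMP`, `W ∈ QMQ` (product `W*Y`). -/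
lemma B4' (P Y W : A) (hP : P * P = P) (hY1 : Y * P = Y) (hY2 : P * Y = 0)
    (hW1 : P * W = 0) (hW2 : W * P = 0) :
    c.δ (W*Y) = c.bm.r (c.δ W) Y + c.bm.l W (c.δ Y)
      + c.bm.r (c.δ Y) W + c.bm.l Y (c.δ W) := by
  have hYY : Y * Y = 0 := by
    calc Y*Y = (Y*P)*Y := by rw [hY1]
    _ = Y*(P*Y) := by rw [mul_assoc]
    _ = 0 := by rw [hY2, mul_zero]
  have hYW : Y * W = 0 := by
    calc Y*W = (Y*P)*W := by rw [hY1]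
    _ = Y*(P*W) := by rw [mul_assoc]
    _ = 0 := by rw [hW1, mul_zero]
  have hPWY : P * (W*Y) = 0 := by rw [← mul_assoc, hW1, zero_mul]
  have hWYP : (W*Y) * P = W*Y := by rw [mul_assoc, hY1]
  have p1 : (P+Y) * (W - W*Y) = 0 := by
    rw [add_mul, mul_sub, mul_sub, hW1, hPWY, ← mul_assoc, hYW, zero_mul]; abel
  have p2 : (W - W*Y) * (P+Y) = 0 := by
    rw [sub_mul, mul_add, mul_add, hW2, hWYP, mul_assoc W Y Y, hYY, mul_zero]; abel
  have p3 : (P-Y) * (W + W*Y) = 0 := by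
    rw [sub_mul, mul_add, mul_add, hW1, hPWY, ← mul_assoc, hYW, zero_mul]; abel
  have p4 : (W + W*Y) * (P-Y) = 0 := by
    rw [add_mul, mul_sub, mul_sub, hW2, hWYP, mul_assoc W Y Y, hYY, mul_zero]; abel
  have h1 := c.hf (P+Y) (W - W*Y) p1 p2
  have h2 := c.hf (P-Y) (W + W*Y) p3 p4
  rw [c.hadd, c.hδsub] at h1
  rw [c.hδsub, c.hadd] at h2
  simp only [RingBimod.radd, RingBimod.addr, RingBimod.ladd, RingBimod.addl,
    RingBimod.rsub, RingBimod.subr, RingBimod.lsub, RingBimod.subl] at h1 h2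
  have hQ : (1-P) * (1-P) = 1-P := by
    rw [sub_mul, one_mul, mul_sub, mul_one, hP]; abel
  have e1 : (1-P) * (W*Y) = W*Y := by rw [sub_mul, one_mul, hPWY, sub_zero]
  have e2 : (W*Y) * (1-P) = 0 := by rw [mul_sub, mul_one, hWYP, sub_self]
  have k := c.B2 (1-P) (W*Y) hQ e1 e2
  rw [c.hδsub, c.hδ1] at k
  simp only [zero_sub, RingBimod.lneg, RingBimod.rneg, RingBimod.rsub,
    RingBimod.subr, RingBimod.lsub, RingBimod.subl, c.hu1, c.hu2] at k
  apply c.half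
  linear_combination (norm := abel) - k - k - h1 + h2

/-- The derivation defect. -/
def g (a b : A) : M := c.δ (a*b) - c.bm.r (c.δ a) b - c.bm.l a (c.δ b)

/-- Hochschild cocycle identity for the defect (pure algebra). -/
lemma coc (a b d : A) :
    c.g (a*b) d + c.bm.r (c.g a b) d = c.g a (b*d) + c.bm.l a (c.g b d) := by
  unfold g
  simp only [RingBimod.rsub, RingBimod.lsub, RingBimod.r_r, RingBimod.l_l,
    RingBimod.lr, mul_assoc]
  abel

end ZCtx

namespace RingBimod

variable {A M : Type*} [Ring A] [AddCommGroup M] (bm : RingBimod A M)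

lemma sumr {ι : Type*} (s : Finset ι) (f : ι → M) (a : A) :
    bm.r (∑ i ∈ s, f i) a = ∑ i ∈ s, bm.r (f i) a := by
  classical
  induction s using Finset.induction_on with
  | empty => simp
  | insert _ _ h ih => simp [Finset.sum_insert h, ih]

lemma rsum {ι : Type*} (s : Finset ι) (m : M) (f : ι → A) :
    bm.r m (∑ i ∈ s, f i) = ∑ i ∈ s, bm.r m (f i) := by
  classical
  induction s using Finset.induction_on with
  | empty => simp
  | insert _ _ h ih => simp [Finset.sum_insert h, ih]

lemma lsumM {ι : Type*} (s : Finset ι) (a : A) (f : ι → M) :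
    bm.l a (∑ i ∈ s, f i) = ∑ i ∈ s, bm.l a (f i) := by
  classical
  induction s using Finset.induction_on with
  | empty => simp
  | insert _ _ h ih => simp [Finset.sum_insert h, ih]

lemma lsum {ι : Type*} (s : Finset ι) (m : M) (f : ι → A) :
    bm.l (∑ i ∈ s, f i) m = ∑ i ∈ s, bm.l (f i) m := by
  classical
  induction s using Finset.induction_on with
  | empty => simp
  | insert _ _ h ih => simp [Finset.sum_insert h, ih]

lemma rsplit (m : M) {a b ab : A} (h : a * b = ab) :
    bm.r m ab = bm.r (bm.r m a) b := by rw [bm.r_r, h]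

lemma lsplit (m : M) {a b ab : A} (h : a * b = ab) :
    bm.l ab m = bm.l a (bm.l b m) := by rw [bm.l_l, h]

end RingBimod

section MatLevel

open Matrix

variable {R : Type*} [Ring R] {n : ℕ} {M : Type*} [AddCommGroup M]

local notation "xx" => Matrix.single

lemma xmul (p q s : Fin n) (a b : R) :
    (xx p q a : Matrix (Fin n) (Fin n) R) * xx q s b = xx p s (a*b) :=
  Matrix.single_mul_single_same (c := a) p q s b

lemma xmul0 {q r : Fin n} (h : q ≠ r) (p s : Fin n) (a b : R) :
    (xx p q a : Matrix (Fin n) (Fin n) R) * xx r s b = 0 :=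
  Matrix.single_mul_single_of_ne (c := a) p q r h b

lemma one_eq_sum : (1 : Matrix (Fin n) (Fin n) R) = ∑ t, xx t t (1:R) := by
  ext i j
  rw [Matrix.sum_apply]
  by_cases h : i = j
  · subst h
    rw [Matrix.one_apply_eq]
    rw [Finset.sum_eq_single i]
    · simp [Matrix.single]
    · intro b _ hb
      simp [Matrix.single, hb]
    · simp
  · rw [Matrix.one_apply_ne h]
    symm
    apply Finset.sum_eq_zero
    intro t _
    simp only [Matrix.single, Matrix.of_apply]
    rw [if_neg]
    rintro ⟨rfl, rfl⟩
    exact h rfl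

lemma sub_diag_eq_sum (p : Fin n) :
    (1 : Matrix (Fin n) (Fin n) R) - xx p p (1:R)
      = ∑ t ∈ Finset.univ.erase p, xx t t (1:R) := by
  have h := Finset.sum_erase_add Finset.univ (fun t => (xx t t (1:R) : Matrix (Fin n) (Fin n) R)) (Finset.mem_univ p)
  rw [one_eq_sum (R := R) (n := n), ← h]
  abel

variable (c : ZCtx (Matrix (Fin n) (Fin n) R) M)

lemma K1 (p q : Fin n) (hpq : p ≠ q) (a : R) :
    c.δ (xx p q a) = c.bm.r (c.δ (xx p q a)) (xx p p 1) + c.bm.l (xx p p 1) (c.δ (xx p q a))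
      + c.bm.r (c.δ (xx p p 1)) (xx p q a) + c.bm.l (xx p q a) (c.δ (xx p p 1)) :=
  c.B2 (xx p p 1) (xx p q a) (by rw [xmul, one_mul]) (by rw [xmul, one_mul])
    (by rw [xmul0 (Ne.symm hpq)])

lemma K2 (p q : Fin n) (hpq : p ≠ q) (a : R) :
    c.δ (xx p q a) = c.bm.r (c.δ (xx p q a)) (xx q q 1) + c.bm.l (xx q q 1) (c.δ (xx p q a))
      + c.bm.r (c.δ (xx q q 1)) (xx p q a) + c.bm.l (xx p q a) (c.δ (xx q q 1)) := by
  have hQ : ((1:Matrix (Fin n) (Fin n) R) - xx q q 1) * (1 - xx q q 1) = 1 - xx q q 1 := by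
    rw [sub_mul, one_mul, mul_sub, mul_one, xmul, one_mul]; abel
  have h1 : ((1:Matrix (Fin n) (Fin n) R) - xx q q 1) * xx p q a = xx p q a := by
    rw [sub_mul, one_mul, xmul0 (Ne.symm hpq), sub_zero]
  have h2 : (xx p q a : Matrix (Fin n) (Fin n) R) * (1 - xx q q 1) = 0 := by
    rw [mul_sub, mul_one, xmul, mul_one, sub_self]
  have k := c.B2 _ _ hQ h1 h2
  rw [c.hδsub, c.hδ1] at k
  simp only [zero_sub, RingBimod.lneg, RingBimod.rneg, RingBimod.rsub,
    RingBimod.subr, RingBimod.lsub, RingBimod.subl, c.hu1, c.hu2] at k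
  linear_combination (norm := abel) -k

lemma C1 (p q : Fin n) (hpq : p ≠ q) (a : R) :
    c.bm.r (c.bm.l (xx p p 1) (c.δ (xx p q a))) (xx p p 1)
      = -(c.bm.r (c.bm.l (xx p q a) (c.δ (xx p p 1))) (xx p p 1)) := by
  have k := K1 c p q hpq a
  have hh := congrArg (fun m => c.bm.r m (xx p p (1:R))) k
  simp only [RingBimod.radd, RingBimod.r_r, RingBimod.lr,
    xmul, one_mul, mul_one, xmul0 (Ne.symm hpq), RingBimod.zeror] at hh
  linear_combination (norm := abel) -hh

lemma C4 (p q : Fin n) (hpq : p ≠ q) (a : R) :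
    c.bm.r (c.bm.l (xx q q 1) (c.δ (xx p q a))) (xx q q 1)
      = -(c.bm.r (c.bm.l (xx q q 1) (c.δ (xx q q 1))) (xx p q a)) := by
  have k := K2 c p q hpq a
  have hh := congrArg (c.bm.l (xx q q (1:R))) k
  simp only [RingBimod.ladd, RingBimod.l_l, RingBimod.lr,
    xmul, one_mul, mul_one, xmul0 (Ne.symm hpq), RingBimod.zerol,
    RingBimod.rzero] at hh
  linear_combination (norm := abel) -hh

lemma Wlem (p q : Fin n) (hpq : p ≠ q) (a : R) :
    c.bm.r (c.bm.l ((1:Matrix (Fin n) (Fin n) R) - xx p p 1) (c.δ (xx p q a))) (xx p p 1) = 0 := by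
  have hstep : ∀ s : Fin n, s ≠ p →
      c.bm.r (c.bm.l (xx s s 1) (c.δ (xx p q a))) (xx p p 1) = 0 := by
    intro s hsp
    have hP1 : ((xx p p 1 + xx p s 1 : Matrix (Fin n) (Fin n) R)) *
        (xx p p 1 + xx p s 1) = xx p p 1 + xx p s 1 := by
      simp [add_mul, mul_add, xmul, xmul0 hsp]
    have hPW : ((xx p p 1 + xx p s 1 : Matrix (Fin n) (Fin n) R)) *
        (xx s q a - xx p q a) = 0 := by
      simp [mul_sub, add_mul, xmul, xmul0 hsp, xmul0 (Ne.symm hsp)]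
    have hWP : ((xx s q a - xx p q a : Matrix (Fin n) (Fin n) R)) *
        (xx p p 1 + xx p s 1) = 0 := by
      simp [sub_mul, mul_add, xmul0 (Ne.symm hpq)]
    have hB3 := c.B3 _ _ hP1 hPW hWP
    rw [c.hδsub] at hB3
    simp only [RingBimod.lsub, RingBimod.ladd, RingBimod.addl, RingBimod.radd,
      RingBimod.addr, RingBimod.rsub, RingBimod.subr] at hB3
    -- auxiliary values
    have A1 : c.bm.r (c.bm.l (xx p p 1) (c.δ (xx s q a))) (xx p p 1) = 0 :=
      c.B3 _ _ (by rw [xmul, one_mul]) (xmul0 (Ne.symm hsp) p q 1 a)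
        (xmul0 (Ne.symm hpq) s p a 1)
    have A2 : c.bm.r (c.bm.l (xx p p 1) (c.δ (xx s q a))) (xx p s 1) = 0 := by
      rw [c.bm.rsplit _ (show (xx p p 1 : Matrix (Fin n) (Fin n) R) * xx p s 1 = xx p s 1
        by rw [xmul, one_mul]), A1, RingBimod.rzero]
    have LW := c.LemW (xx p p 1) (xx s q a) (by rw [xmul, one_mul])
      (xmul0 (Ne.symm hsp) p q 1 a) (xmul0 (Ne.symm hpq) s p a 1)
    have A3 : c.bm.r (c.bm.l (xx p s 1) (c.δ (xx s q a))) (xx p p 1)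
        = -(c.bm.r (c.bm.l (xx p q a) (c.δ (xx p p 1))) (xx p p 1)) := by
      rw [← RingBimod.lr, LW]
      simp only [RingBimod.lneg, RingBimod.lr, RingBimod.l_l, xmul, one_mul]
    have A4 : c.bm.r (c.bm.l (xx p s 1) (c.δ (xx s q a))) (xx p s 1)
        = -(c.bm.r (c.bm.l (xx p q a) (c.δ (xx p p 1))) (xx p s 1)) := by
      rw [c.bm.rsplit _ (show (xx p p 1 : Matrix (Fin n) (Fin n) R) * xx p s 1 = xx p s 1
        by rw [xmul, one_mul]), A3]
      simp only [RingBimod.rneg, RingBimod.r_r, xmul, one_mul]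
    have B1 := C1 c p q hpq a
    have B2t : c.bm.r (c.bm.l (xx p p 1) (c.δ (xx p q a))) (xx p s 1)
        = -(c.bm.r (c.bm.l (xx p q a) (c.δ (xx p p 1))) (xx p s 1)) := by
      rw [c.bm.rsplit _ (show (xx p p 1 : Matrix (Fin n) (Fin n) R) * xx p s 1 = xx p s 1
        by rw [xmul, one_mul]), B1]
      simp only [RingBimod.rneg, RingBimod.r_r, xmul, one_mul]
    have B4t : c.bm.r (c.bm.l (xx p s 1) (c.δ (xx p q a))) (xx p s 1)
        = c.bm.r (c.bm.r (c.bm.l (xx p s 1) (c.δ (xx p q a))) (xx p p 1)) (xx p s 1) := by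
      rw [c.bm.rsplit _ (show (xx p p 1 : Matrix (Fin n) (Fin n) R) * xx p s 1 = xx p s 1
        by rw [xmul, one_mul])]
    have key : c.bm.r (c.bm.l (xx p s 1) (c.δ (xx p q a))) (xx p p 1)
        + c.bm.r (c.bm.r (c.bm.l (xx p s 1) (c.δ (xx p q a))) (xx p p 1)) (xx p s 1) = 0 := by
      linear_combination (norm := abel) -hB3 + A1 + A2 + A3 + A4 - B1 - B2t - B4t
    have key2 := congrArg (fun m => c.bm.r m (xx p p (1:R))) key
    simp only [RingBimod.radd, RingBimod.r_r, xmul, one_mul,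
      xmul0 hsp, RingBimod.zeror, add_zero, RingBimod.rzero] at key2
    -- key2 : ω = 0
    have hfin := congrArg (c.bm.l (xx s p (1:R))) key2
    simp only [RingBimod.lr, RingBimod.l_l, xmul, one_mul, RingBimod.lzero] at hfin
    exact hfin
  rw [sub_diag_eq_sum p, RingBimod.suml, RingBimod.sumr]
  apply Finset.sum_eq_zero
  intro t ht
  exact hstep t (Finset.ne_of_mem_erase ht)

lemma Vlem (p q : Fin n) (hpq : p ≠ q) (a : R) :
    c.bm.r (c.bm.l (xx q q 1) (c.δ (xx p q a))) ((1:Matrix (Fin n) (Fin n) R) - xx q q 1) = 0 := by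
  have hstep : ∀ s : Fin n, s ≠ q →
      c.bm.r (c.bm.l (xx q q 1) (c.δ (xx p q a))) (xx s s 1) = 0 := by
    intro s hsq
    have hP1 : ((xx q q 1 + xx s q 1 : Matrix (Fin n) (Fin n) R)) *
        (xx q q 1 + xx s q 1) = xx q q 1 + xx s q 1 := by
      simp [add_mul, mul_add, xmul, xmul0 hsq, xmul0 (Ne.symm hsq)]
    have hPW : ((xx q q 1 + xx s q 1 : Matrix (Fin n) (Fin n) R)) *
        (xx p s a - xx p q a) = 0 := by
      simp [mul_sub, add_mul, xmul0 (Ne.symm hpq)]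
    have hWP : ((xx p s a - xx p q a : Matrix (Fin n) (Fin n) R)) *
        (xx q q 1 + xx s q 1) = 0 := by
      simp [sub_mul, mul_add, xmul, xmul0 hsq, xmul0 (Ne.symm hsq)]
    have hB3 := c.B3 _ _ hP1 hPW hWP
    rw [c.hδsub] at hB3
    simp only [RingBimod.lsub, RingBimod.ladd, RingBimod.addl, RingBimod.radd,
      RingBimod.addr, RingBimod.rsub, RingBimod.subr] at hB3
    have A1 : c.bm.r (c.bm.l (xx q q 1) (c.δ (xx p s a))) (xx q q 1) = 0 :=
      c.B3 _ _ (by rw [xmul, one_mul]) (xmul0 (Ne.symm hpq) q s 1 a)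
        (xmul0 hsq p q a 1)
    have LV := c.LemV (xx q q 1) (xx p s a) (by rw [xmul, one_mul])
      (xmul0 (Ne.symm hpq) q s 1 a) (xmul0 hsq p q a 1)
    have A2 : c.bm.r (c.bm.l (xx q q 1) (c.δ (xx p s a))) (xx s q 1)
        = -(c.bm.r (c.bm.l (xx q q 1) (c.δ (xx q q 1))) (xx p q a)) := by
      rw [LV]
      simp only [RingBimod.rneg, RingBimod.r_r, xmul, mul_one]
    have A3 : c.bm.r (c.bm.l (xx s q 1) (c.δ (xx p s a))) (xx q q 1) = 0 := by
      rw [c.bm.lsplit _ (show (xx s q 1 : Matrix (Fin n) (Fin n) R) * xx q q 1 = xx s q 1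
        by rw [xmul, mul_one]), ← RingBimod.lr, ← RingBimod.lr]
      have LW := c.LemW (xx q q 1) (xx p s a) (by rw [xmul, one_mul])
        (xmul0 (Ne.symm hpq) q s 1 a) (xmul0 hsq p q a 1)
      rw [LW]
      simp only [RingBimod.lneg, RingBimod.lr, RingBimod.l_l,
        xmul0 (Ne.symm hpq), RingBimod.zerol, RingBimod.rzero, neg_zero,
        RingBimod.lzero]
    have A4 : c.bm.r (c.bm.l (xx s q 1) (c.δ (xx p s a))) (xx s q 1)
        = -(c.bm.r (c.bm.l (xx s q 1) (c.δ (xx q q 1))) (xx p q a)) := by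
      rw [c.bm.lsplit _ (show (xx s q 1 : Matrix (Fin n) (Fin n) R) * xx q q 1 = xx s q 1
        by rw [xmul, mul_one]), ← RingBimod.lr, LV]
      simp only [RingBimod.lneg, RingBimod.rneg, RingBimod.lr, RingBimod.l_l,
        RingBimod.r_r, xmul, mul_one]
    have B1 := C4 c p q hpq a
    have B3t : c.bm.r (c.bm.l (xx s q 1) (c.δ (xx p q a))) (xx q q 1)
        = -(c.bm.r (c.bm.l (xx s q 1) (c.δ (xx q q 1))) (xx p q a)) := by
      rw [c.bm.lsplit _ (show (xx s q 1 : Matrix (Fin n) (Fin n) R) * xx q q 1 = xx s q 1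
        by rw [xmul, mul_one]), ← RingBimod.lr, B1]
      simp only [RingBimod.lneg, RingBimod.rneg, RingBimod.lr, RingBimod.l_l,
        RingBimod.r_r, xmul, mul_one]
    have B4t : c.bm.r (c.bm.l (xx s q 1) (c.δ (xx p q a))) (xx s q 1)
        = c.bm.l (xx s q 1) (c.bm.r (c.bm.l (xx q q 1) (c.δ (xx p q a))) (xx s q 1)) := by
      rw [c.bm.lsplit _ (show (xx s q 1 : Matrix (Fin n) (Fin n) R) * xx q q 1 = xx s q 1
        by rw [xmul, mul_one]), ← RingBimod.lr, ← RingBimod.lr]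
    have key : c.bm.r (c.bm.l (xx q q 1) (c.δ (xx p q a))) (xx s q 1)
        + c.bm.l (xx s q 1) (c.bm.r (c.bm.l (xx q q 1) (c.δ (xx p q a))) (xx s q 1)) = 0 := by
      linear_combination (norm := abel) -hB3 + A1 + A2 + A3 + A4 - B1 - B3t - B4t
    have key2 := congrArg (c.bm.l (xx q q (1:R))) key
    simp only [RingBimod.ladd, RingBimod.l_l, RingBimod.lr, xmul, one_mul,
      xmul0 (Ne.symm hsq), RingBimod.zerol, add_zero, RingBimod.lzero] at key2
    have hfin := congrArg (fun m => c.bm.r m (xx q s (1:R))) key2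
    simp only [RingBimod.radd, RingBimod.r_r, xmul, one_mul, RingBimod.rzero,
      add_zero] at hfin
    exact hfin
  have hsplit : ((1:Matrix (Fin n) (Fin n) R) - xx q q 1)
      = ∑ t ∈ Finset.univ.erase q, xx t t 1 := sub_diag_eq_sum q
  rw [hsplit, RingBimod.rsum]
  apply Finset.sum_eq_zero
  intro t ht
  exact hstep t (Finset.ne_of_mem_erase ht)

lemma Wcor (p q : Fin n) (hpq : p ≠ q) (a : R) :
    c.bm.r (c.δ (xx p q a)) (xx p p 1)
      = -(c.bm.r (c.bm.l (xx p q a) (c.δ (xx p p 1))) (xx p p 1)) := by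
  have hX : (xx p p 1 : Matrix (Fin n) (Fin n) R) + (1 - xx p p 1) = 1 := by abel
  have hsp : c.δ (xx p q a) = c.bm.l (xx p p 1) (c.δ (xx p q a))
      + c.bm.l ((1:Matrix (Fin n) (Fin n) R) - xx p p 1) (c.δ (xx p q a)) := by
    rw [← RingBimod.addl, hX, c.hu1]
  have h1 := congrArg (fun m => c.bm.r m (xx p p (1:R))) hsp
  simp only [RingBimod.radd] at h1
  rw [h1, Wlem c p q hpq a, add_zero, C1 c p q hpq a]

lemma Vcor (p q : Fin n) (hpq : p ≠ q) (a : R) :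
    c.bm.l (xx q q 1) (c.δ (xx p q a))
      = -(c.bm.r (c.bm.l (xx q q 1) (c.δ (xx q q 1))) (xx p q a)) := by
  have hX : (xx q q 1 : Matrix (Fin n) (Fin n) R) + (1 - xx q q 1) = 1 := by abel
  have h1 : c.bm.l (xx q q 1) (c.δ (xx p q a))
      = c.bm.r (c.bm.l (xx q q 1) (c.δ (xx p q a))) (xx q q 1)
        + c.bm.r (c.bm.l (xx q q 1) (c.δ (xx p q a))) ((1:Matrix (Fin n) (Fin n) R) - xx q q 1) := by
    rw [← RingBimod.addr, hX, c.hu2]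
  rw [h1, Vlem c p q hpq a, add_zero, C4 c p q hpq a]

lemma C8 (t q r : Fin n) (hq : t ≠ q) (hr : t ≠ r) :
    c.bm.r (c.bm.l (xx q q 1) (c.δ (xx t t 1))) (xx r r 1) = 0 := by
  have k := c.idem (xx t t (1:R)) (by rw [xmul, one_mul])
  have hh := congrArg (fun m => c.bm.r (c.bm.l (xx q q (1:R)) m) (xx r r (1:R))) k
  simp only [RingBimod.ladd, RingBimod.radd, RingBimod.lr, RingBimod.l_l,
    RingBimod.r_r, xmul0 hr, xmul0 (Ne.symm hq), RingBimod.zerol,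
    RingBimod.zeror, RingBimod.rzero, add_zero, zero_add] at hh
  exact hh

lemma Csum (q r : Fin n) (hqr : q ≠ r) (u v : Matrix (Fin n) (Fin n) R)
    (hu : u * xx q q 1 = u) (hv : xx r r 1 * v = v) :
    c.bm.r (c.bm.l u (c.δ (xx q q 1))) v + c.bm.r (c.bm.l u (c.δ (xx r r 1))) v = 0 := by
  classical
  have hS : ∑ t, c.δ (xx t t (1:R)) = 0 := by
    rw [← c.hδsum, ← one_eq_sum]; exact c.hδ1
  have hAll := congrArg (fun m => c.bm.r (c.bm.l u m) v) hS
  simp only [RingBimod.lsumM, RingBimod.sumr, RingBimod.lzero,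
    RingBimod.rzero] at hAll
  have hrest : ∀ t ∈ Finset.univ \ ({q, r} : Finset (Fin n)),
      c.bm.r (c.bm.l u (c.δ (xx t t 1))) v = 0 := by
    intro t ht
    rw [Finset.mem_sdiff, Finset.mem_insert, Finset.mem_singleton] at ht
    push_neg at ht
    obtain ⟨-, htq, htr⟩ := ht
    rw [c.bm.lsplit _ hu, c.bm.rsplit _ hv, ← RingBimod.lr,
      C8 c t q r htq htr, RingBimod.lzero, RingBimod.rzero]
  have hsplit := Finset.sum_sdiff (Finset.subset_univ ({q, r} : Finset (Fin n)))
    (f := fun t => c.bm.r (c.bm.l u (c.δ (xx t t 1))) v)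
  rw [Finset.sum_eq_zero hrest, zero_add, Finset.sum_pair hqr] at hsplit
  rw [hsplit]
  simpa using hAll

lemma EQdel (q r s : Fin n) (hqr : q ≠ r) (b : R) :
    c.bm.l (xx q q 1) (c.δ (xx r s b))
      = c.bm.r (c.bm.l (xx q q 1) (c.δ (xx r r 1))) (xx r s b) := by
  have heq : (xx q q 1 : Matrix (Fin n) (Fin n) R) * (1 - xx r r 1) = xx q q 1 := by
    rw [mul_sub, mul_one, xmul0 hqr, sub_zero]
  by_cases hrs : r = s
  · subst hrs
    have k := c.rhoQ' (xx r r 1) (xx r r b) (by rw [xmul, one_mul])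
      (by rw [xmul, one_mul]) (by rw [xmul, mul_one])
    have hh := congrArg (c.bm.l (xx q q (1:R))) k
    simp only [RingBimod.l_l, RingBimod.lr, heq] at hh
    exact hh
  · have W1 : c.bm.r (c.bm.l (xx q q 1) (c.δ (xx r s b))) (xx r r 1) = 0 := by
      have := congrArg (c.bm.l (xx q q (1:R))) (Wlem c r s hrs b)
      simp only [RingBimod.l_l, RingBimod.lr, heq, RingBimod.lzero] at this
      exact this
    have hh := congrArg (c.bm.l (xx q q (1:R))) (K1 c r s hrs b)
    simp only [RingBimod.ladd, RingBimod.l_l, RingBimod.lr,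
      xmul0 hqr, RingBimod.zerol, add_zero, zero_add] at hh
    rw [W1] at hh
    rw [zero_add] at hh
    exact hh

lemma Case1p (p q s : Fin n) (hpq : p ≠ q) (a b : R) :
    c.bm.r (c.δ (xx p q a)) (xx p s b) + c.bm.l (xx p q a) (c.δ (xx p s b)) = 0 := by
  have E1 : c.bm.r (c.δ (xx p q a)) (xx p s b)
      = -(c.bm.r (c.bm.l (xx p q a) (c.δ (xx p p 1))) (xx p s b)) := by
    rw [c.bm.rsplit _ (show (xx p p 1 : Matrix (Fin n) (Fin n) R) * xx p s b = xx p s b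
      by rw [xmul, one_mul]), Wcor c p q hpq a]
    simp only [RingBimod.rneg, RingBimod.r_r, xmul, one_mul]
  have E2 : c.bm.l (xx p q a) (c.δ (xx p s b))
      = c.bm.r (c.bm.l (xx p q a) (c.δ (xx p p 1))) (xx p s b) := by
    rw [c.bm.lsplit _ (show (xx p q a : Matrix (Fin n) (Fin n) R) * xx q q 1 = xx p q a
      by rw [xmul, mul_one]), EQdel c q p s (Ne.symm hpq) b]
    simp only [RingBimod.lr, RingBimod.l_l, xmul, mul_one]
  rw [E1, E2]; abel

lemma Case1r (p q r s : Fin n) (hpq : p ≠ q) (hrp : r ≠ p) (hrq : r ≠ q) (a b : R) :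
    c.bm.r (c.δ (xx p q a)) (xx r s b) + c.bm.l (xx p q a) (c.δ (xx r s b)) = 0 := by
  have hbeta := congrArg (fun m => c.bm.r m (xx r r (1:R))) (K1 c p q hpq a)
  simp only [RingBimod.radd, RingBimod.r_r, RingBimod.lr,
    xmul0 (Ne.symm hrp), xmul0 (Ne.symm hrq), RingBimod.zeror,
    RingBimod.rzero, zero_add, add_zero] at hbeta
  have halpha := congrArg (fun m => c.bm.r m (xx r r (1:R))) (K2 c p q hpq a)
  simp only [RingBimod.radd, RingBimod.r_r, RingBimod.lr,
    xmul0 (Ne.symm hrp), xmul0 (Ne.symm hrq), xmul0 (Ne.symm hrq).symm,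
    RingBimod.zeror, RingBimod.rzero, zero_add, add_zero] at halpha
  -- kill the e_q-row part of hbeta
  have hkill := congrArg (c.bm.l (xx q q (1:R))) hbeta
  simp only [RingBimod.ladd, RingBimod.l_l, RingBimod.lr,
    xmul0 (Ne.symm hpq), RingBimod.zerol, RingBimod.rzero, add_zero,
    zero_add] at hkill
  -- hkill : r (l e_q δx) e_r = 0
  rw [hkill, zero_add] at halpha
  -- halpha : r (δ x) e_r = r (l x δ e_q) e_r
  have E1 : c.bm.r (c.δ (xx p q a)) (xx r s b)
      = c.bm.r (c.bm.l (xx p q a) (c.δ (xx q q 1))) (xx r s b) := by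
    rw [c.bm.rsplit _ (show (xx r r 1 : Matrix (Fin n) (Fin n) R) * xx r s b = xx r s b
      by rw [xmul, one_mul]), halpha, RingBimod.r_r, xmul, one_mul]
  have E2 : c.bm.l (xx p q a) (c.δ (xx r s b))
      = c.bm.r (c.bm.l (xx p q a) (c.δ (xx r r 1))) (xx r s b) := by
    rw [c.bm.lsplit _ (show (xx p q a : Matrix (Fin n) (Fin n) R) * xx q q 1 = xx p q a
      by rw [xmul, mul_one]), EQdel c q r s (Ne.symm hrq) b]
    simp only [RingBimod.lr, RingBimod.l_l, xmul, mul_one]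
  rw [E1, E2]
  exact Csum c q r (Ne.symm hrq) (xx p q a) (xx r s b)
    (by rw [xmul, mul_one]) (by rw [xmul, one_mul])

lemma Case1 (p q r s : Fin n) (hpq : p ≠ q) (hrq : r ≠ q) (a b : R) :
    c.bm.r (c.δ (xx p q a)) (xx r s b) + c.bm.l (xx p q a) (c.δ (xx r s b)) = 0 := by
  by_cases hrp : r = p
  · subst hrp; exact Case1p c r q s hpq a b
  · exact Case1r c p q r s hpq hrp hrq a b

lemma Csum2 (p q : Fin n) (hpq : p ≠ q) (u v : Matrix (Fin n) (Fin n) R)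
    (hu : u * xx q q 1 = u) (hv : xx p p 1 * v = v) :
    c.bm.r (c.bm.l u (c.δ (xx p p 1))) v + c.bm.r (c.bm.l u (c.δ (xx q q 1))) v = 0 := by
  classical
  have hS : ∑ t, c.δ (xx t t (1:R)) = 0 := by
    rw [← c.hδsum, ← one_eq_sum]; exact c.hδ1
  have hAll := congrArg (fun m => c.bm.r (c.bm.l u m) v) hS
  simp only [RingBimod.lsumM, RingBimod.sumr, RingBimod.lzero,
    RingBimod.rzero] at hAll
  have hrest : ∀ t ∈ Finset.univ \ ({p, q} : Finset (Fin n)),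
      c.bm.r (c.bm.l u (c.δ (xx t t 1))) v = 0 := by
    intro t ht
    rw [Finset.mem_sdiff, Finset.mem_insert, Finset.mem_singleton] at ht
    push_neg at ht
    obtain ⟨-, htp, htq⟩ := ht
    rw [c.bm.lsplit _ hu, c.bm.rsplit _ hv, ← RingBimod.lr,
      C8 c t q p htq htp, RingBimod.lzero, RingBimod.rzero]
  have hsplit := Finset.sum_sdiff (Finset.subset_univ ({p, q} : Finset (Fin n)))
    (f := fun t => c.bm.r (c.bm.l u (c.δ (xx t t 1))) v)
  rw [Finset.sum_eq_zero hrest, zero_add, Finset.sum_pair hpq] at hsplit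
  rw [hsplit]
  simpa using hAll

lemma Ulem (p q : Fin n) (hpq : p ≠ q) (a b : R) :
    c.bm.r (c.δ (xx q q b)) (xx p q a) + c.bm.l (xx q q b) (c.δ (xx p q a)) = 0 := by
  have LW := c.LemW (xx p p 1) (xx q q b) (by rw [xmul, one_mul])
    (xmul0 hpq p q 1 b) (xmul0 (Ne.symm hpq) q p b 1)
  have E1 : c.bm.r (c.δ (xx q q b)) (xx p q a)
      = -(c.bm.r (c.bm.l (xx q q b) (c.δ (xx p p 1))) (xx p q a)) := by
    rw [c.bm.rsplit _ (show (xx p p 1 : Matrix (Fin n) (Fin n) R) * xx p q a = xx p q a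
      by rw [xmul, one_mul]), LW]
    simp only [RingBimod.rneg, RingBimod.r_r, xmul, one_mul]
  have E2 : c.bm.l (xx q q b) (c.δ (xx p q a))
      = -(c.bm.r (c.bm.l (xx q q b) (c.δ (xx q q 1))) (xx p q a)) := by
    rw [c.bm.lsplit _ (show (xx q q b : Matrix (Fin n) (Fin n) R) * xx q q 1 = xx q q b
      by rw [xmul, mul_one]), Vcor c p q hpq a]
    simp only [RingBimod.lneg, RingBimod.lr, RingBimod.l_l, xmul, mul_one]
  rw [E1, E2]
  have := Csum2 c p q hpq (xx q q b) (xx p q a)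
    (by rw [xmul, mul_one]) (by rw [xmul, one_mul])
  linear_combination (norm := abel) -this

lemma J22 (p q s : Fin n) (hpq : p ≠ q) (hsp : s ≠ p) (a b : R) :
    c.δ (xx p s (a*b)) = c.bm.r (c.δ (xx p q a)) (xx q s b)
      + c.bm.l (xx p q a) (c.δ (xx q s b)) + c.bm.r (c.δ (xx q s b)) (xx p q a)
      + c.bm.l (xx q s b) (c.δ (xx p q a)) := by
  have h := c.B4 (xx p p 1) (xx p q a) (xx q s b) (by rw [xmul, one_mul])
    (by rw [xmul, one_mul]) (xmul0 (Ne.symm hpq) p p a 1)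
    (xmul0 hpq p s 1 b) (xmul0 hsp q p b 1)
  rw [xmul] at h
  exact h

lemma PR2a (p q s : Fin n) (hpq : p ≠ q) (hsp : s ≠ p) (a b : R) :
    c.δ (xx p s (a*b)) = c.bm.r (c.δ (xx p q a)) (xx q s b)
      + c.bm.l (xx p q a) (c.δ (xx q s b)) := by
  have hJ := J22 c p q s hpq hsp a b
  by_cases hqs : q = s
  · subst hqs
    have hU := Ulem c p q hpq a b
    linear_combination (norm := abel) hJ + hU
  · have hC := Case1 c q s p q hqs (Ne.symm hsp) b a
    linear_combination (norm := abel) hJ + hC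

lemma PRC (p s : Fin n) (hsp : s ≠ p) (d e : R) :
    c.δ (xx p s (d*e)) = c.bm.r (c.δ (xx p p d)) (xx p s e)
      + c.bm.l (xx p p d) (c.δ (xx p s e)) := by
  have hQ : ((1:Matrix (Fin n) (Fin n) R) - xx p p 1) * (1 - xx p p 1)
      = 1 - xx p p 1 := by
    rw [sub_mul, one_mul, mul_sub, mul_one, xmul, one_mul]; abel
  have hJ := c.B4' (1 - xx p p 1) (xx p s e) (xx p p d) hQ
    (by rw [mul_sub, mul_one, xmul0 hsp, sub_zero])
    (by rw [sub_mul, one_mul, xmul, one_mul, sub_self])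
    (by rw [sub_mul, one_mul, xmul, one_mul, sub_self])
    (by rw [mul_sub, mul_one, xmul, mul_one, sub_self])
  rw [xmul] at hJ
  have hC := Case1 c p s p p (Ne.symm hsp) (Ne.symm hsp) e d
  linear_combination (norm := abel) hJ + hC

lemma HNY (p q : Fin n) (hpq : p ≠ q) (d e : R) :
    c.bm.r (c.δ (xx p p d)) (xx q p e) + c.bm.l (xx p p d) (c.δ (xx q p e)) = 0 := by
  have hrho := c.rhoQ (xx p p 1) (xx p p d) (by rw [xmul, one_mul])
    (by rw [xmul, one_mul]) (by rw [xmul, mul_one])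
  have E1 : c.bm.r (c.δ (xx p p d)) (xx q p e)
      = c.bm.r (c.bm.l (xx p p d) (c.δ (xx p p 1))) (xx q p e) := by
    rw [c.bm.rsplit _ (show ((1:Matrix (Fin n) (Fin n) R) - xx p p 1) * xx q p e = xx q p e
      by rw [sub_mul, one_mul, xmul0 hpq, sub_zero]), hrho, RingBimod.r_r,
      sub_mul, one_mul, xmul0 hpq, sub_zero]
  have E2 : c.bm.l (xx p p d) (c.δ (xx q p e))
      = -(c.bm.r (c.bm.l (xx p p d) (c.δ (xx p p 1))) (xx q p e)) := by
    rw [c.bm.lsplit _ (show (xx p p d : Matrix (Fin n) (Fin n) R) * xx p p 1 = xx p p d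
      by rw [xmul, mul_one]), Vcor c q p (Ne.symm hpq) e]
    simp only [RingBimod.lneg, RingBimod.lr, RingBimod.l_l, xmul, mul_one]
  rw [E1, E2]; abel

lemma PRC' (p q : Fin n) (hpq : p ≠ q) (e d : R) :
    c.δ (xx q p (e*d)) = c.bm.r (c.δ (xx q p e)) (xx p p d)
      + c.bm.l (xx q p e) (c.δ (xx p p d)) := by
  have hQ : ((1:Matrix (Fin n) (Fin n) R) - xx p p 1) * (1 - xx p p 1)
      = 1 - xx p p 1 := by
    rw [sub_mul, one_mul, mul_sub, mul_one, xmul, one_mul]; abel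
  have hJ := c.B4 (1 - xx p p 1) (xx q p e) (xx p p d) hQ
    (by rw [sub_mul, one_mul, xmul0 hpq, sub_zero])
    (by rw [mul_sub, mul_one, xmul, mul_one, sub_self])
    (by rw [sub_mul, one_mul, xmul, one_mul, sub_self])
    (by rw [mul_sub, mul_one, xmul, mul_one, sub_self])
  rw [xmul] at hJ
  have hH := HNY c p q hpq d e
  linear_combination (norm := abel) hJ + hH

lemma G2221 (p q : Fin n) (hpq : p ≠ q) (b u : R) :
    c.δ (xx q p (b*u)) = c.bm.r (c.δ (xx q q b)) (xx q p u)
      + c.bm.l (xx q q b) (c.δ (xx q p u)) := by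
  have hJ := c.B4' (xx p p 1) (xx q p u) (xx q q b) (by rw [xmul, one_mul])
    (by rw [xmul, mul_one]) (xmul0 hpq p p 1 u)
    (xmul0 hpq p q 1 b) (xmul0 (Ne.symm hpq) q p b 1)
  rw [xmul] at hJ
  have hC := Case1 c q p q q (Ne.symm hpq) (Ne.symm hpq) u b
  linear_combination (norm := abel) hJ + hC

lemma QrowK (p q : Fin n) (hpq : p ≠ q) (a : R) :
    c.bm.l ((1:Matrix (Fin n) (Fin n) R) - xx p p 1) (c.δ (xx p q a))
      = c.bm.r (c.bm.l ((1:Matrix (Fin n) (Fin n) R) - xx p p 1) (c.δ (xx p p 1))) (xx p q a) := by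
  have hh := congrArg (c.bm.l ((1:Matrix (Fin n) (Fin n) R) - xx p p 1)) (K1 c p q hpq a)
  have e1 : ((1:Matrix (Fin n) (Fin n) R) - xx p p 1) * xx p p 1 = 0 := by
    rw [sub_mul, one_mul, xmul, one_mul, sub_self]
  have e2 : ((1:Matrix (Fin n) (Fin n) R) - xx p p 1) * xx p q a = 0 := by
    rw [sub_mul, one_mul, xmul, one_mul, sub_self]
  simp only [RingBimod.ladd, RingBimod.l_l, RingBimod.lr, e1, e2,
    RingBimod.zerol, RingBimod.rzero, add_zero, zero_add] at hh
  rw [Wlem c p q hpq a] at hh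
  rw [zero_add] at hh
  exact hh

lemma gCase1 (p q r s : Fin n) (hpq : p ≠ q) (hrq : r ≠ q) (a b : R) :
    c.g (xx p q a) (xx r s b) = 0 := by
  unfold ZCtx.g
  rw [xmul0 (Ne.symm hrq), c.hδ0]
  linear_combination (norm := abel) -Case1 c p q r s hpq hrq a b

lemma gPR2a (p q s : Fin n) (hpq : p ≠ q) (hsp : s ≠ p) (a b : R) :
    c.g (xx p q a) (xx q s b) = 0 := by
  unfold ZCtx.g
  rw [xmul]
  linear_combination (norm := abel) PR2a c p q s hpq hsp a b

lemma gPRC (p s : Fin n) (hsp : s ≠ p) (d e : R) :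
    c.g (xx p p d) (xx p s e) = 0 := by
  unfold ZCtx.g
  rw [xmul]
  linear_combination (norm := abel) PRC c p s hsp d e

lemma gPRC' (p q : Fin n) (hpq : p ≠ q) (e d : R) :
    c.g (xx q p e) (xx p p d) = 0 := by
  unfold ZCtx.g
  rw [xmul]
  linear_combination (norm := abel) PRC' c p q hpq e d

lemma gG2221 (p q : Fin n) (hpq : p ≠ q) (b u : R) :
    c.g (xx q q b) (xx q p u) = 0 := by
  unfold ZCtx.g
  rw [xmul]
  linear_combination (norm := abel) G2221 c p q hpq b u

lemma G2bpre (p q : Fin n) (hpq : p ≠ q) (a b : R) :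
    c.g (xx p q a) (xx q p b) = c.g (xx p q (a*b)) (xx q p 1) := by
  have hc := c.coc (xx p q a) (xx q q b) (xx q p 1)
  simp only [xmul, mul_one] at hc
  rw [gPR2a c p q q hpq (Ne.symm hpq) a b, gG2221 c p q hpq b 1] at hc
  simp only [RingBimod.rzero, RingBimod.lzero, add_zero] at hc
  exact hc.symm

lemma G2bpre' (p q : Fin n) (hpq : p ≠ q) (a b : R) :
    c.g (xx q p a) (xx p q b) = c.g (xx q p (a*b)) (xx p q 1) := by
  have hc := c.coc (xx q p a) (xx p p b) (xx p q 1)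
  simp only [xmul, mul_one] at hc
  rw [gPRC' c p q hpq a b, gPRC c p q (Ne.symm hpq) b 1] at hc
  simp only [RingBimod.rzero, RingBimod.lzero, add_zero] at hc
  exact hc.symm

lemma hatL (p q : Fin n) (hpq : p ≠ q) (e : R) :
    c.bm.l (xx p p 1) (c.g (xx p q e) (xx q p 1)) = c.g (xx p q e) (xx q p 1) := by
  have hG : c.g (xx p q e) (xx q p 1) = c.δ (xx p p e)
      - c.bm.r (c.δ (xx p q e)) (xx q p 1)
      - c.bm.l (xx p q e) (c.δ (xx q p 1)) := by
    unfold ZCtx.g; rw [xmul, mul_one]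
  have hzero : c.bm.l ((1:Matrix (Fin n) (Fin n) R) - xx p p 1)
      (c.g (xx p q e) (xx q p 1)) = 0 := by
    rw [hG]
    simp only [RingBimod.lsub]
    have T1 := c.rhoQ' (xx p p 1) (xx p p e) (by rw [xmul, one_mul])
      (by rw [xmul, one_mul]) (by rw [xmul, mul_one])
    have T2 : c.bm.l ((1:Matrix (Fin n) (Fin n) R) - xx p p 1)
        (c.bm.r (c.δ (xx p q e)) (xx q p 1))
        = c.bm.r (c.bm.l ((1:Matrix (Fin n) (Fin n) R) - xx p p 1) (c.δ (xx p p 1))) (xx p p e) := by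
      rw [RingBimod.lr, QrowK c p q hpq e, RingBimod.r_r, xmul, mul_one]
    have T3 : c.bm.l ((1:Matrix (Fin n) (Fin n) R) - xx p p 1)
        (c.bm.l (xx p q e) (c.δ (xx q p 1))) = 0 := by
      rw [RingBimod.l_l, show ((1:Matrix (Fin n) (Fin n) R) - xx p p 1) * xx p q e = 0
        by rw [sub_mul, one_mul, xmul, one_mul, sub_self], RingBimod.zerol]
    rw [T1, T2, T3]
    abel
  have hXP : (xx p p 1 : Matrix (Fin n) (Fin n) R) + (1 - xx p p 1) = 1 := by abel
  have h1 : c.g (xx p q e) (xx q p 1)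
      = c.bm.l (xx p p 1) (c.g (xx p q e) (xx q p 1))
        + c.bm.l ((1:Matrix (Fin n) (Fin n) R) - xx p p 1) (c.g (xx p q e) (xx q p 1)) := by
    rw [← RingBimod.addl, hXP, c.hu1]
  rw [hzero, add_zero] at h1
  exact h1.symm

lemma hatL' (p q : Fin n) (hpq : p ≠ q) (e : R) :
    c.bm.l (xx q q 1) (c.g (xx q p e) (xx p q 1)) = c.g (xx q p e) (xx p q 1) := by
  have hG : c.g (xx q p e) (xx p q 1) = c.δ (xx q q e)
      - c.bm.r (c.δ (xx q p e)) (xx p q 1)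
      - c.bm.l (xx q p e) (c.δ (xx p q 1)) := by
    unfold ZCtx.g; rw [xmul, mul_one]
  have hzero : c.bm.l ((1:Matrix (Fin n) (Fin n) R) - xx q q 1)
      (c.g (xx q p e) (xx p q 1)) = 0 := by
    rw [hG]
    simp only [RingBimod.lsub]
    have T1 := c.rhoQ' (xx q q 1) (xx q q e) (by rw [xmul, one_mul])
      (by rw [xmul, one_mul]) (by rw [xmul, mul_one])
    have T2 : c.bm.l ((1:Matrix (Fin n) (Fin n) R) - xx q q 1)
        (c.bm.r (c.δ (xx q p e)) (xx p q 1))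
        = c.bm.r (c.bm.l ((1:Matrix (Fin n) (Fin n) R) - xx q q 1) (c.δ (xx q q 1))) (xx q q e) := by
      rw [RingBimod.lr, QrowK c q p (Ne.symm hpq) e, RingBimod.r_r, xmul, mul_one]
    have T3 : c.bm.l ((1:Matrix (Fin n) (Fin n) R) - xx q q 1)
        (c.bm.l (xx q p e) (c.δ (xx p q 1))) = 0 := by
      rw [RingBimod.l_l, show ((1:Matrix (Fin n) (Fin n) R) - xx q q 1) * xx q p e = 0
        by rw [sub_mul, one_mul, xmul, one_mul, sub_self], RingBimod.zerol]
    rw [T1, T2, T3]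
    abel
  have hXP : (xx q q 1 : Matrix (Fin n) (Fin n) R) + (1 - xx q q 1) = 1 := by abel
  have h1 : c.g (xx q p e) (xx p q 1)
      = c.bm.l (xx q q 1) (c.g (xx q p e) (xx p q 1))
        + c.bm.l ((1:Matrix (Fin n) (Fin n) R) - xx q q 1) (c.g (xx q p e) (xx p q 1)) := by
    rw [← RingBimod.addl, hXP, c.hu1]
  rw [hzero, add_zero] at h1
  exact h1.symm

lemma gpp (p q : Fin n) (hpq : p ≠ q) (a b : R) :
    c.g (xx p p a) (xx p p b) = c.g (xx p q (a*b)) (xx q p 1)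
      - c.bm.l (xx p p a) (c.g (xx p q b) (xx q p 1)) := by
  have hc := c.coc (xx p p a) (xx p q b) (xx q p 1)
  simp only [xmul, mul_one] at hc
  rw [gPRC c p q (Ne.symm hpq) a b] at hc
  simp only [RingBimod.rzero, add_zero] at hc
  linear_combination (norm := abel) -hc

lemma gqq (p q : Fin n) (hpq : p ≠ q) (a b : R) :
    c.g (xx q q a) (xx q q b) = c.g (xx q p (a*b)) (xx p q 1)
      - c.bm.l (xx q q a) (c.g (xx q p b) (xx p q 1)) := by
  have hc := c.coc (xx q q a) (xx q p b) (xx p q 1)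
  simp only [xmul, mul_one] at hc
  rw [gG2221 c p q hpq a b] at hc
  simp only [RingBimod.rzero, add_zero] at hc
  linear_combination (norm := abel) -hc

lemma clubs (p q : Fin n) (hpq : p ≠ q) (u e : R) :
    c.bm.l (xx p p u) (c.g (xx p q e) (xx q p 1))
      + c.bm.l (xx p p e) (c.g (xx p q u) (xx q p 1))
      + c.bm.l (xx q q u) (c.g (xx q p e) (xx p q 1))
      + c.bm.l (xx q q e) (c.g (xx q p u) (xx p q 1)) = 0 := by
  have hAB : ((xx p p u + xx p q u + xx q p u + xx q q u : Matrix (Fin n) (Fin n) R)) *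
      (xx p p e - xx p q e - xx q p e + xx q q e) = 0 := by
    simp only [mul_sub, mul_add, add_mul, sub_mul, xmul, xmul0 hpq,
      xmul0 (Ne.symm hpq)]
    abel
  have hBA : ((xx p p e - xx p q e - xx q p e + xx q q e : Matrix (Fin n) (Fin n) R)) *
      (xx p p u + xx p q u + xx q p u + xx q q u) = 0 := by
    simp only [mul_sub, mul_add, add_mul, sub_mul, xmul, xmul0 hpq,
      xmul0 (Ne.symm hpq)]
    abel
  have hF := c.hf _ _ hAB hBA
  have dA : c.δ (xx p p u + xx p q u + xx q p u + xx q q u)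
      = c.δ (xx p p u) + c.δ (xx p q u) + c.δ (xx q p u) + c.δ (xx q q u) := by
    simp only [c.hadd]
  have dB : c.δ (xx p p e - xx p q e - xx q p e + xx q q e)
      = c.δ (xx p p e) - c.δ (xx p q e) - c.δ (xx q p e) + c.δ (xx q q e) := by
    simp only [c.hadd, c.hδsub]
  rw [dA, dB] at hF
  simp only [RingBimod.radd, RingBimod.addr, RingBimod.rsub, RingBimod.subr,
    RingBimod.ladd, RingBimod.addl, RingBimod.lsub, RingBimod.subl] at hF
  have e1 := PRC c p q (Ne.symm hpq) u e
  have e2 := Case1 c p q p p hpq hpq e u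
  have e3 := PRC' c p q hpq e u
  have e4 := HNY c p q hpq u e
  have e5 := PRC c p q (Ne.symm hpq) e u
  have e6 := Case1 c p q p p hpq hpq u e
  have e7 := PRC' c p q hpq u e
  have e8 := HNY c p q hpq e u
  have e9 := c.hf (xx p p u) (xx q q e) (xmul0 hpq p q u e) (xmul0 (Ne.symm hpq) q p e u)
  have e10 := c.hf (xx q q u) (xx p p e) (xmul0 (Ne.symm hpq) q p u e) (xmul0 hpq p q e u)
  have e11 := c.hf (xx p q u) (xx p q e) (xmul0 (Ne.symm hpq) p q u e)
    (xmul0 (Ne.symm hpq) p q e u)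
  have e12 := c.hf (xx q p u) (xx q p e) (xmul0 hpq q p u e) (xmul0 hpq q p e u)
  have e13 := PR2a c p q q hpq (Ne.symm hpq) u e
  have e14 := Ulem c p q hpq u e
  have e15 := PR2a c p q q hpq (Ne.symm hpq) e u
  have e16 := Ulem c p q hpq e u
  have e17 := G2221 c p q hpq u e
  have e18 := Case1 c q p q q (Ne.symm hpq) (Ne.symm hpq) e u
  have e19 := G2221 c p q hpq e u
  have e20 := Case1 c q p q q (Ne.symm hpq) (Ne.symm hpq) u e
  have d1 : c.g (xx p q u) (xx q p e) = c.δ (xx p p (u*e))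
      - c.bm.r (c.δ (xx p q u)) (xx q p e) - c.bm.l (xx p q u) (c.δ (xx q p e)) := by
    unfold ZCtx.g; rw [xmul]
  have d2 : c.g (xx q p e) (xx p q u) = c.δ (xx q q (e*u))
      - c.bm.r (c.δ (xx q p e)) (xx p q u) - c.bm.l (xx q p e) (c.δ (xx p q u)) := by
    unfold ZCtx.g; rw [xmul]
  have d3 : c.g (xx q p u) (xx p q e) = c.δ (xx q q (u*e))
      - c.bm.r (c.δ (xx q p u)) (xx p q e) - c.bm.l (xx q p u) (c.δ (xx p q e)) := by
    unfold ZCtx.g; rw [xmul]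
  have d4 : c.g (xx p q e) (xx q p u) = c.δ (xx p p (e*u))
      - c.bm.r (c.δ (xx p q e)) (xx q p u) - c.bm.l (xx p q e) (c.δ (xx q p u)) := by
    unfold ZCtx.g; rw [xmul]
  have r1 := G2bpre c p q hpq u e
  have r2 := G2bpre' c p q hpq e u
  have r3 := G2bpre' c p q hpq u e
  have r4 := G2bpre c p q hpq e u
  have dp1 : c.g (xx p p u) (xx p p e) = c.δ (xx p p (u*e))
      - c.bm.r (c.δ (xx p p u)) (xx p p e) - c.bm.l (xx p p u) (c.δ (xx p p e)) := by
    unfold ZCtx.g; rw [xmul]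
  have dp2 : c.g (xx p p e) (xx p p u) = c.δ (xx p p (e*u))
      - c.bm.r (c.δ (xx p p e)) (xx p p u) - c.bm.l (xx p p e) (c.δ (xx p p u)) := by
    unfold ZCtx.g; rw [xmul]
  have dq1 : c.g (xx q q u) (xx q q e) = c.δ (xx q q (u*e))
      - c.bm.r (c.δ (xx q q u)) (xx q q e) - c.bm.l (xx q q u) (c.δ (xx q q e)) := by
    unfold ZCtx.g; rw [xmul]
  have dq2 : c.g (xx q q e) (xx q q u) = c.δ (xx q q (e*u))
      - c.bm.r (c.δ (xx q q e)) (xx q q u) - c.bm.l (xx q q e) (c.δ (xx q q u)) := by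
    unfold ZCtx.g; rw [xmul]
  have p1 := gpp c p q hpq u e
  have p2 := gpp c p q hpq e u
  have q1 := gqq c p q hpq u e
  have q2 := gqq c p q hpq e u
  linear_combination (norm := abel) hF - e1 + e2 - e3 + e4 + e5 - e6 + e7 - e8
    - e9 - e10 + e11 + e12 + e13 - e14 - e15 + e16 - e17 + e18 + e19 - e20
    + d1 - r1 + d2 - r2 + d3 - r3 + d4 - r4
    - dp1 + p1 - dp2 + p2 - dq1 + q1 - dq2 + q2

lemma hatzero (p q : Fin n) (hpq : p ≠ q) (e : R) :
    c.g (xx p q e) (xx q p 1) = 0 ∧ c.g (xx q p e) (xx p q 1) = 0 := by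
  have h11 := clubs c p q hpq 1 1
  rw [hatL c p q hpq 1, hatL' c p q hpq 1] at h11
  have hsum1 : c.g (xx p q (1:R)) (xx q p 1) + c.g (xx q p (1:R)) (xx p q 1) = 0 := by
    apply c.htf
    linear_combination (norm := abel) h11
  have hA1 : c.g (xx p q (1:R)) (xx q p 1) = 0 := by
    have := congrArg (c.bm.l (xx p p (1:R))) hsum1
    simp only [RingBimod.ladd, RingBimod.lzero] at this
    rw [hatL c p q hpq 1] at this
    rw [← hatL' c p q hpq 1, RingBimod.l_l, xmul0 hpq, RingBimod.zerol,
      add_zero] at this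
    exact this
  have hB1 : c.g (xx q p (1:R)) (xx p q 1) = 0 := by
    rw [hA1, zero_add] at hsum1
    exact hsum1
  have he := clubs c p q hpq e 1
  rw [hatL c p q hpq e, hatL' c p q hpq e, hA1, hB1, RingBimod.lzero,
    RingBimod.lzero] at he
  -- he : l (pp e) (Â 1)?? ordering check
  have hsum : c.g (xx p q e) (xx q p 1) + c.g (xx q p e) (xx p q 1) = 0 := by
    linear_combination (norm := abel) he
  have hA : c.g (xx p q e) (xx q p 1) = 0 := by
    have := congrArg (c.bm.l (xx p p (1:R))) hsum
    simp only [RingBimod.ladd, RingBimod.lzero] at this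
    rw [hatL c p q hpq e] at this
    rw [← hatL' c p q hpq e, RingBimod.l_l, xmul0 hpq, RingBimod.zerol,
      add_zero] at this
    exact this
  refine ⟨hA, ?_⟩
  rw [hA, zero_add] at hsum
  exact hsum

lemma g2b (p q : Fin n) (hpq : p ≠ q) (a b : R) :
    c.g (xx p q a) (xx q p b) = 0 := by
  rw [G2bpre c p q hpq a b]
  exact (hatzero c p q hpq (a*b)).1

lemma gunit (p q r s : Fin n) (hpq : p ≠ q) (a b : R) :
    c.g (xx p q a) (xx r s b) = 0 := by
  by_cases hrq : r = q
  · by_cases hsp : s = p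
    · rw [hrq, hsp]
      exact g2b c p q hpq a b
    · rw [hrq]
      exact gPR2a c p q s hpq hsp a b
  · exact gCase1 c p q r s hpq hrq a b

lemma gaddR (A B B' : Matrix (Fin n) (Fin n) R) :
    c.g A (B + B') = c.g A B + c.g A B' := by
  unfold ZCtx.g
  rw [mul_add, c.hadd, c.hadd]
  simp only [RingBimod.addr, RingBimod.ladd]
  abel

lemma gzeroR (A : Matrix (Fin n) (Fin n) R) : c.g A 0 = 0 := by
  unfold ZCtx.g
  rw [mul_zero, c.hδ0]
  simp only [RingBimod.rzero, RingBimod.lzero, RingBimod.zeror,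
    RingBimod.zerol, c.hδ0]
  abel

lemma gsumR {ι : Type*} (A : Matrix (Fin n) (Fin n) R) (t : Finset ι)
    (f : ι → Matrix (Fin n) (Fin n) R) :
    c.g A (∑ i ∈ t, f i) = ∑ i ∈ t, c.g A (f i) := by
  classical
  induction t using Finset.induction_on with
  | empty => simpa using gzeroR c A
  | insert _ _ h ih => simp [Finset.sum_insert h, gaddR, ih]

lemma gaddL (A A' B : Matrix (Fin n) (Fin n) R) :
    c.g (A + A') B = c.g A B + c.g A' B := by
  unfold ZCtx.g
  rw [add_mul, c.hadd, c.hadd]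
  simp only [RingBimod.radd, RingBimod.addl]
  abel

lemma gzeroL (B : Matrix (Fin n) (Fin n) R) : c.g 0 B = 0 := by
  unfold ZCtx.g
  rw [zero_mul, c.hδ0]
  simp only [RingBimod.zerol, RingBimod.rzero, RingBimod.zeror,
    RingBimod.lzero, c.hδ0]
  abel

lemma gsumL {ι : Type*} (B : Matrix (Fin n) (Fin n) R) (t : Finset ι)
    (f : ι → Matrix (Fin n) (Fin n) R) :
    c.g (∑ i ∈ t, f i) B = ∑ i ∈ t, c.g (f i) B := by
  classical
  induction t using Finset.induction_on with
  | empty => simpa using gzeroL c B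
  | insert _ _ h ih => simp [Finset.sum_insert h, gaddL, ih]

lemma gxB (p q : Fin n) (hpq : p ≠ q) (a : R) (B : Matrix (Fin n) (Fin n) R) :
    c.g (xx p q a) B = 0 := by
  rw [show B = ∑ r, ∑ s, xx r s (B r s) from Matrix.matrix_eq_sum_single B,
    gsumR]
  apply Finset.sum_eq_zero
  intro r _
  rw [gsumR]
  apply Finset.sum_eq_zero
  intro s _
  exact gunit c p q r s hpq a (B r s)

lemma gdiag (hn : 2 ≤ n) (p : Fin n) (a : R) (B : Matrix (Fin n) (Fin n) R) :
    c.g (xx p p a) B = 0 := by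
  have : Nontrivial (Fin n) := Fin.nontrivial_iff_two_le.mpr hn
  obtain ⟨q, hq⟩ := exists_ne p
  have hc := c.coc (xx p q a) (xx q p 1) B
  rw [xmul, mul_one] at hc
  rw [g2b c p q (Ne.symm hq) a 1, gxB c p q (Ne.symm hq) a (xx q p 1 * B),
    gxB c q p hq 1 B] at hc
  simp only [RingBimod.rzero, RingBimod.lzero, add_zero] at hc
  rw [hc]

lemma gAll (hn : 2 ≤ n) (A B : Matrix (Fin n) (Fin n) R) : c.g A B = 0 := by
  rw [show A = ∑ r, ∑ s, xx r s (A r s) from Matrix.matrix_eq_sum_single A,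
    gsumL]
  apply Finset.sum_eq_zero
  intro r _
  rw [gsumL]
  apply Finset.sum_eq_zero
  intro s _
  by_cases hrs : r = s
  · subst hrs
    exact gdiag c hn r (A r r) B
  · exact gxB c r s hrs (A r s) B

end MatLevel

theorem stmt2 (R : Type*) [Ring R] (n : ℕ) (hn : 2 ≤ n)
    (M : Type*) [AddCommGroup M] (bm : RingBimod (Matrix (Fin n) (Fin n) R) M)
    (hunit : ∀ m : M, bm.l 1 m = m ∧ bm.r m 1 = m)
    (htf : ∀ m : M, m + m = 0 → m = 0)
    (D : Matrix (Fin n) (Fin n) R → M)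
    (hadd : ∀ A B, D (A + B) = D A + D B)
    (hD : ∀ A B, A * B = 0 → B * A = 0 →
      bm.r (D A) B + bm.l A (D B) + bm.r (D B) A + bm.l B (D A)
        - bm.l A (bm.r (D 1) B) - bm.l B (bm.r (D 1) A) = 0) :
    ∃ δ : Matrix (Fin n) (Fin n) R → M,
      (∀ A B, δ (A + B) = δ A + δ B) ∧
      (∀ A B, δ (A * B) = bm.r (δ A) B + bm.l A (δ B)) ∧
      (∀ A, D A = δ A + bm.l A (D 1)) := by
  have hu1 : ∀ m : M, bm.l 1 m = m := fun m => (hunit m).1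
  have hu2 : ∀ m : M, bm.r m 1 = m := fun m => (hunit m).2
  have hadd' : ∀ A B : Matrix (Fin n) (Fin n) R,
      (D (A+B) - bm.l (A+B) (D 1)) = (D A - bm.l A (D 1)) + (D B - bm.l B (D 1)) := by
    intro A B
    rw [hadd, RingBimod.addl]
    abel
  have hδ1' : D 1 - bm.l 1 (D 1) = 0 := by
    rw [hu1]
    exact sub_self _
  have hf' : ∀ A B : Matrix (Fin n) (Fin n) R, A*B = 0 → B*A = 0 →
      bm.r (D A - bm.l A (D 1)) B + bm.l A (D B - bm.l B (D 1))
        + bm.r (D B - bm.l B (D 1)) A + bm.l B (D A - bm.l A (D 1)) = 0 := by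
    intro A B h1 h2
    have hD' := hD A B h1 h2
    simp only [RingBimod.lr] at hD'
    simp only [RingBimod.rsub, RingBimod.lsub, RingBimod.lr, RingBimod.l_l,
      h1, h2, RingBimod.zerol]
    linear_combination (norm := abel) hD'
  let c : ZCtx (Matrix (Fin n) (Fin n) R) M :=
    ⟨bm, fun A => D A - bm.l A (D 1), hu1, hu2, htf, hadd', hδ1', hf'⟩
  refine ⟨fun A => D A - bm.l A (D 1), hadd', ?_, ?_⟩
  · intro A B
    have h2 : (D (A*B) - bm.l (A*B) (D 1)) - bm.r (D A - bm.l A (D 1)) B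
        - bm.l A (D B - bm.l B (D 1)) = 0 := gAll c hn A B
    beta_reduce
    linear_combination (norm := abel) h2
  · intro A
    show D A = (D A - bm.l A (D 1)) + bm.l A (D 1)
    abel
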